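/- Fix s ∈ {1,2} and h ∈ ℝ, and let Ψ_h(p) = exp(h·cv_s(p)) for p ∈ (0,1), where cv₁(p) = Φ⁻¹(1−p) and cv₂(p) = Φ⁻¹(1−p/2). Then for every integer k ≥ 1 there exist polynomials A^k_0, …, A^k_{k−1} with nonnegative real coefficients (independent of h, p, and s) such that the k-th derivative of Ψ_h satisfies Ψ_h^{(k)}(p) = (−1)^k · [h · Σ_{j=0}^{k−1} A^k_j(cv_s(p)) · (cv_s(p) + h)^j] / [s^k · φ(cv_s(p))^k] · exp(h·cv_s(p)) for all p ∈ (0,1). -/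

import Mathlib

open MeasureTheory Filter Topology

/-- The standard normal density φ(x) = (2π)^{-1/2} exp(-x²/2). -/
noncomputable def stdNormalPdf (x : ℝ) : ℝ :=
  (Real.sqrt (2 * Real.pi))⁻¹ * Real.exp (-x ^ 2 / 2)

/-- The standard normal CDF Φ(x) = ∫_{-∞}^x φ(t) dt. -/
noncomputable def stdNormalCdf (x : ℝ) : ℝ :=
  ∫ t in Set.Iic x, stdNormalPdf t

lemma pdf_pos (x : ℝ) : 0 < stdNormalPdf x := by
  unfold stdNormalPdf
  positivity

lemma pdf_cont : Continuous stdNormalPdf := by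
  unfold stdNormalPdf
  fun_prop

lemma pdf_integrable : Integrable stdNormalPdf := by
  unfold stdNormalPdf
  apply Integrable.const_mul
  have h : ∀ x : ℝ, -x ^ 2 / 2 = -((1:ℝ)/2) * x ^ 2 := by intro x; ring
  simp_rw [h]
  exact integrable_exp_neg_mul_sq (by norm_num)

lemma hasDerivAt_pdf (x : ℝ) : HasDerivAt stdNormalPdf (-x * stdNormalPdf x) x := by
  unfold stdNormalPdf
  have h : HasDerivAt (fun y : ℝ => -y ^ 2 / 2) (-x) x := by
    have := ((hasDerivAt_pow 2 x).neg).div_const 2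
    refine this.congr_deriv ?_
    simp; ring
  have := (h.exp).const_mul (Real.sqrt (2 * Real.pi))⁻¹
  refine this.congr_deriv ?_
  ring

lemma hasDerivAt_cdf (x : ℝ) : HasDerivAt stdNormalCdf (stdNormalPdf x) x := by
  have key : ∀ y : ℝ, stdNormalCdf y = stdNormalCdf 0 + ∫ t in (0:ℝ)..y, stdNormalPdf t := by
    intro y
    rw [← intervalIntegral.integral_Iic_sub_Iic pdf_integrable.integrableOn pdf_integrable.integrableOn]
    unfold stdNormalCdf; ring
  have h2 : HasDerivAt (fun y : ℝ => stdNormalCdf 0 + ∫ t in (0:ℝ)..y, stdNormalPdf t)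
      (stdNormalPdf x) x := by
    apply HasDerivAt.const_add
    exact intervalIntegral.integral_hasDerivAt_right
      (pdf_integrable.intervalIntegrable)
      (pdf_cont.stronglyMeasurableAtFilter _ _) pdf_cont.continuousAt
  exact h2.congr_deriv rfl |>.congr_of_eventuallyEq (by filter_upwards with y; rw [key])

lemma cdf_strictMono : StrictMono stdNormalCdf := by
  intro a b hab
  have h1 : stdNormalCdf b - stdNormalCdf a = ∫ t in a..b, stdNormalPdf t :=
    intervalIntegral.integral_Iic_sub_Iic pdf_integrable.integrableOn pdf_integrable.integrableOn
  have h2 : 0 < ∫ t in a..b, stdNormalPdf t := by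
    apply intervalIntegral.intervalIntegral_pos_of_pos
    · exact pdf_integrable.intervalIntegrable
    · exact pdf_pos
    · exact hab
  linarith

noncomputable def Ak : ℕ → ℕ → Polynomial ℝ
  | 0, _ => 0
  | 1, j => if j = 0 then 1 else 0
  | (k+2), j => (Ak (k+1) j).derivative + Polynomial.C ((j:ℝ)+1) * Ak (k+1) (j+1)
      + Polynomial.C (k:ℝ) * (Polynomial.X * Ak (k+1) j)
      + (if j = 0 then 0 else Ak (k+1) (j-1))

theorem Ak_nonneg : ∀ k j i, 0 ≤ (Ak k j).coeff i
  | 0, j, i => by simp [Ak]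
  | 1, j, i => by
      by_cases h : j = 0 <;> simp [Ak, h, Polynomial.coeff_one]
      split <;> norm_num
  | (k+2), j, i => by
      have h1 := Ak_nonneg (k+1) j
      have h2 := Ak_nonneg (k+1) (j+1)
      have h3 := Ak_nonneg (k+1) (j-1)
      simp only [Ak, Polynomial.coeff_add, Polynomial.coeff_C_mul, Polynomial.coeff_derivative]
      have hX : 0 ≤ (Polynomial.X * Ak (k+1) j).coeff i := by
        cases i with
        | zero => simp
        | succ n => rw [Polynomial.coeff_X_mul]; exact h1 n
      have hif : 0 ≤ (if j = 0 then (0:Polynomial ℝ) else Ak (k+1) (j-1)).coeff i := by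
        split <;> simp [h3 i]
      refine add_nonneg (add_nonneg (add_nonneg ?_ ?_) ?_) hif
      · exact mul_nonneg (h1 (i+1)) (by positivity)
      · exact mul_nonneg (by positivity) (h2 i)
      · exact mul_nonneg (Nat.cast_nonneg k) hX

theorem Ak_zero : ∀ k j, k ≤ j → Ak k j = 0
  | 0, j, _ => by simp [Ak]
  | 1, j, hj => by
      have : j ≠ 0 := by omega
      simp [Ak, this]
  | (k+2), j, hj => by
      have e1 : Ak (k+1) j = 0 := Ak_zero (k+1) j (by omega)
      have e2 : Ak (k+1) (j+1) = 0 := Ak_zero (k+1) (j+1) (by omega)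
      have e3 : Ak (k+1) (j-1) = 0 := Ak_zero (k+1) (j-1) (by omega)
      have : j ≠ 0 := by omega
      simp [Ak, this, e1, e2, e3]

lemma cv_contAt {s : ℕ} (hσ : 0 < (s:ℝ)) {cv : ℝ → ℝ}
    (hcv : ∀ q ∈ Set.Ioo (0:ℝ) 1, stdNormalCdf (cv q) = 1 - q / s)
    {p : ℝ} (hp : p ∈ Set.Ioo (0:ℝ) 1) : ContinuousAt cv p := by
  rw [ContinuousAt, Metric.tendsto_nhds]
  intro ε hε
  set x := cv p with hx
  have hgx : stdNormalCdf x = 1 - p / s := hcv p hp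
  have hps : p = s * (1 - stdNormalCdf x) := by rw [hgx]; field_simp; ring
  set q₁ := (s:ℝ) * (1 - stdNormalCdf (x + ε)) with hq₁
  set q₂ := (s:ℝ) * (1 - stdNormalCdf (x - ε)) with hq₂
  have h1 : q₁ < p := by
    have := cdf_strictMono (show x < x + ε by linarith)
    rw [hps]; apply mul_lt_mul_of_pos_left _ hσ; linarith
  have h2 : p < q₂ := by
    have := cdf_strictMono (show x - ε < x by linarith)
    rw [hps]; apply mul_lt_mul_of_pos_left _ hσ; linarith
  have hV : Set.Ioo (max q₁ 0) (min q₂ 1) ∈ 𝓝 p :=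
    Ioo_mem_nhds (max_lt h1 hp.1) (lt_min h2 hp.2)
  filter_upwards [hV] with q hq
  have hq01 : q ∈ Set.Ioo (0:ℝ) 1 :=
    ⟨lt_of_le_of_lt (le_max_right _ _) hq.1, lt_of_lt_of_le hq.2 (min_le_right _ _)⟩
  have hgq : stdNormalCdf (cv q) = 1 - q / s := hcv q hq01
  have hqs : q = s * (1 - stdNormalCdf (cv q)) := by rw [hgq]; field_simp; ring
  rw [Real.dist_eq, abs_sub_lt_iff]
  constructor
  · by_contra hcon
    push_neg at hcon
    have hle : x + ε ≤ cv q := by linarith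
    have := cdf_strictMono.monotone hle
    have hq1 : q ≤ q₁ := by
      rw [hqs, hq₁]; apply mul_le_mul_of_nonneg_left _ (le_of_lt hσ); linarith
    have := lt_of_le_of_lt (le_max_left q₁ 0) hq.1
    linarith
  · by_contra hcon
    push_neg at hcon
    have hle : cv q ≤ x - ε := by linarith
    have := cdf_strictMono.monotone hle
    have hq2 : q₂ ≤ q := by
      rw [hqs, hq₂]; apply mul_le_mul_of_nonneg_left _ (le_of_lt hσ); linarith
    have := lt_of_lt_of_le hq.2 (min_le_left q₂ 1)
    linarith

lemma cv_hasDerivAt {s : ℕ} (hσ : 0 < (s:ℝ)) {cv : ℝ → ℝ}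
    (hcv : ∀ q ∈ Set.Ioo (0:ℝ) 1, stdNormalCdf (cv q) = 1 - q / s)
    {p : ℝ} (hp : p ∈ Set.Ioo (0:ℝ) 1) :
    HasDerivAt cv (-((s:ℝ) * stdNormalPdf (cv p)))⁻¹ p := by
  have hf : HasDerivAt (fun t => (s:ℝ) * (1 - stdNormalCdf t))
      (-((s:ℝ) * stdNormalPdf (cv p))) (cv p) := by
    have := ((hasDerivAt_cdf (cv p)).const_sub 1).const_mul (s:ℝ)
    refine this.congr_deriv ?_; ring
  have hf' : -((s:ℝ) * stdNormalPdf (cv p)) ≠ 0 := by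
    have := pdf_pos (cv p)
    nlinarith
  have hfg : ∀ᶠ q in 𝓝 p, (s:ℝ) * (1 - stdNormalCdf (cv q)) = q := by
    filter_upwards [Ioo_mem_nhds hp.1 hp.2] with q hq
    rw [hcv q hq]; field_simp; ring
  exact HasDerivAt.of_local_left_inverse (cv_contAt hσ hcv hp) hf hf' hfg

lemma sum_identity (m : ℕ) (c h : ℝ) :
    ∑ j ∈ Finset.range (m+2), (Ak (m+2) j).eval c * (c+h)^j =
      (∑ j ∈ Finset.range (m+1), ((Ak (m+1) j).derivative.eval c * (c+h)^j
          + (Ak (m+1) j).eval c * ((j:ℝ) * (c+h)^(j-1))))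
      + (m:ℝ) * c * (∑ j ∈ Finset.range (m+1), (Ak (m+1) j).eval c * (c+h)^j)
      + (c+h) * (∑ j ∈ Finset.range (m+1), (Ak (m+1) j).eval c * (c+h)^j) := by
  have expand : ∀ j, (Ak (m+2) j).eval c * (c+h)^j =
      (Ak (m+1) j).derivative.eval c * (c+h)^j
      + ((j:ℝ)+1) * (Ak (m+1) (j+1)).eval c * (c+h)^j
      + (m:ℝ) * (c * ((Ak (m+1) j).eval c * (c+h)^j))
      + (if j = 0 then 0 else (Ak (m+1) (j-1)).eval c) * (c+h)^j := by
    intro j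
    show (Polynomial.eval c ((Ak (m+1) j).derivative + Polynomial.C ((j:ℝ)+1) * Ak (m+1) (j+1)
      + Polynomial.C (m:ℝ) * (Polynomial.X * Ak (m+1) j)
      + (if j = 0 then 0 else Ak (m+1) (j-1)))) * (c+h)^j = _
    split <;> simp <;> ring
  simp only [expand]
  rw [Finset.sum_add_distrib, Finset.sum_add_distrib, Finset.sum_add_distrib]
  have e1 : ∑ j ∈ Finset.range (m+2), (Ak (m+1) j).derivative.eval c * (c+h)^j
      = ∑ j ∈ Finset.range (m+1), (Ak (m+1) j).derivative.eval c * (c+h)^j := by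
    rw [Finset.sum_range_succ, Ak_zero (m+1) (m+1) le_rfl]
    simp
  have e2 : ∑ j ∈ Finset.range (m+2), ((j:ℝ)+1) * (Ak (m+1) (j+1)).eval c * (c+h)^j
      = ∑ j ∈ Finset.range (m+1), (Ak (m+1) j).eval c * ((j:ℝ) * (c+h)^(j-1)) := by
    rw [Finset.sum_range_succ, Finset.sum_range_succ, Ak_zero (m+1) (m+1) le_rfl,
      Ak_zero (m+1) (m+2) (by omega), Finset.sum_range_succ']
    simp only [Polynomial.eval_zero, Nat.cast_zero, mul_zero, zero_mul, add_zero,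
      Nat.cast_succ, pow_zero, mul_one, zero_add, Nat.add_sub_cancel]
    apply Finset.sum_congr rfl
    intro j _
    ring
  have e3 : ∑ j ∈ Finset.range (m+2), (m:ℝ) * (c * ((Ak (m+1) j).eval c * (c+h)^j))
      = (m:ℝ) * c * ∑ j ∈ Finset.range (m+1), (Ak (m+1) j).eval c * (c+h)^j := by
    rw [Finset.sum_range_succ, Ak_zero (m+1) (m+1) le_rfl, Finset.mul_sum]
    simp only [Polynomial.eval_zero, zero_mul, mul_zero, add_zero]
    apply Finset.sum_congr rfl
    intro j _
    ring
  have e4 : ∑ j ∈ Finset.range (m+2), (if j = 0 then 0 else (Ak (m+1) (j-1)).eval c) * (c+h)^j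
      = (c+h) * ∑ j ∈ Finset.range (m+1), (Ak (m+1) j).eval c * (c+h)^j := by
    rw [Finset.sum_range_succ', Finset.mul_sum]
    simp only [Nat.add_eq_zero, one_ne_zero, and_false, if_false, if_true, eq_self_iff_true,
      Nat.add_sub_cancel, zero_mul, add_zero]
    apply Finset.sum_congr rfl
    intro j _
    ring
  rw [e1, e2, e3, e4, Finset.sum_add_distrib]


/-- for s ∈ {1,2}, let cv_s(p) = Φ⁻¹(1 − p/s) on (0,1) (so cv₁(p) = Φ⁻¹(1−p)
and cv₂(p) = Φ⁻¹(1−p/2)) and Ψ_h(p) = exp(h·cv_s(p)). For every integer k ≥ 1 there exist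
polynomials A^k_0, …, A^k_{k−1} with nonnegative coefficients, independent of h, p and s,
such that for all p ∈ (0,1),
Ψ_h^{(k)}(p) = (−1)^k·[h·Σ_{j<k} A^k_j(cv_s(p))·(cv_s(p)+h)^j] / [s^k·φ(cv_s(p))^k]
                · exp(h·cv_s(p)). -/
theorem stmt_10 :
    ∀ k : ℕ, 1 ≤ k →
      ∃ A : ℕ → Polynomial ℝ,
        (∀ j i : ℕ, 0 ≤ (A j).coeff i) ∧
        ∀ s : ℕ, (s = 1 ∨ s = 2) →
          ∀ cv : ℝ → ℝ, (∀ p ∈ Set.Ioo (0 : ℝ) 1, stdNormalCdf (cv p) = 1 - p / s) →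
            ∀ h : ℝ, ∀ p ∈ Set.Ioo (0 : ℝ) 1,
              iteratedDeriv k (fun q => Real.exp (h * cv q)) p =
                (-1 : ℝ) ^ k *
                  (h * ∑ j ∈ Finset.range k, (A j).eval (cv p) * (cv p + h) ^ j) /
                    ((s : ℝ) ^ k * stdNormalPdf (cv p) ^ k) *
                  Real.exp (h * cv p) := by
  intro k hk
  refine ⟨Ak k, fun j i => Ak_nonneg k j i, ?_⟩
  intro s hs cv hcv h p hp
  have hσ : (0:ℝ) < s := by rcases hs with rfl|rfl <;> norm_num
  have hσ0 : (s:ℝ) ≠ 0 := ne_of_gt hσ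
  revert p
  intro p hp
  suffices H : ∀ q ∈ Set.Ioo (0:ℝ) 1, iteratedDeriv k (fun y => Real.exp (h * cv y)) q =
      (-1:ℝ)^k * (h * ∑ j ∈ Finset.range k, (Ak k j).eval (cv q) * (cv q + h)^j)
        / ((s:ℝ)^k * stdNormalPdf (cv q)^k) * Real.exp (h * cv q) from H p hp
  clear hp p
  induction k, hk using Nat.le_induction with
  | base =>
    intro q hq
    have hC := cv_hasDerivAt hσ hcv hq
    have hE : HasDerivAt (fun x => Real.exp (h * cv x))
        (Real.exp (h * cv q) * (h * (-((s:ℝ) * stdNormalPdf (cv q)))⁻¹)) q :=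
      (hC.const_mul h).exp
    rw [iteratedDeriv_one, hE.deriv]
    have hf := (pdf_pos (cv q)).ne'
    simp [Ak]
    field_simp
  | succ n hn IH =>
    intro q hq
    rw [iteratedDeriv_succ]
    have heq : (fun x => iteratedDeriv n (fun y => Real.exp (h * cv y)) x) =ᶠ[𝓝 q]
        (fun x => (-1:ℝ)^n * (h * ∑ j ∈ Finset.range n, (Ak n j).eval (cv x) * (cv x + h)^j)
          / ((s:ℝ)^n * stdNormalPdf (cv x)^n) * Real.exp (h * cv x)) := by
      filter_upwards [Ioo_mem_nhds hq.1 hq.2] with x hx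
      exact IH x hx
    rw [heq.deriv_eq]
    set c := cv q with hc
    set f := stdNormalPdf c with hfdef
    set c' := (-((s:ℝ) * f))⁻¹ with hc'
    have hC : HasDerivAt cv c' q := cv_hasDerivAt hσ hcv hq
    have hfpos : 0 < f := pdf_pos c
    have hS : HasDerivAt (fun x => ∑ j ∈ Finset.range n, (Ak n j).eval (cv x) * (cv x + h)^j)
        (∑ j ∈ Finset.range n, ((Ak n j).derivative.eval c * c' * (c+h)^j
          + (Ak n j).eval c * ((j:ℝ) * (c+h)^(j-1) * c'))) q := by
      apply HasDerivAt.fun_sum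
      intro j _
      exact (HasDerivAt.comp q (Polynomial.hasDerivAt (Ak n j) c) hC).mul
        ((hC.add_const h).pow j)
    have hpdf : HasDerivAt (fun x => stdNormalPdf (cv x)) (-c * f * c') q := by
      have h0 : HasDerivAt stdNormalPdf (-c * f) (cv q) := hasDerivAt_pdf c
      have := HasDerivAt.comp q h0 hC
      exact this
    have hden : HasDerivAt (fun x => (s:ℝ)^n * stdNormalPdf (cv x)^n)
        ((s:ℝ)^n * ((n:ℝ) * f^(n-1) * (-c * f * c'))) q := (hpdf.pow n).const_mul _
    have hE : HasDerivAt (fun x => Real.exp (h * cv x)) (Real.exp (h * c) * (h * c')) q :=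
      (hC.const_mul h).exp
    have hdenne : (s:ℝ)^n * f^n ≠ 0 := by positivity
    have hnum : HasDerivAt
        (fun x => (-1:ℝ)^n * (h * ∑ j ∈ Finset.range n, (Ak n j).eval (cv x) * (cv x + h)^j))
        ((-1:ℝ)^n * (h * (∑ j ∈ Finset.range n, ((Ak n j).derivative.eval c * c' * (c+h)^j
          + (Ak n j).eval c * ((j:ℝ) * (c+h)^(j-1) * c'))))) q := (hS.const_mul h).const_mul _
    have hG := (hnum.fun_div hden hdenne).fun_mul hE
    rw [hG.deriv]
    obtain ⟨m, rfl⟩ : ∃ m, n = m + 1 := ⟨n - 1, by omega⟩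
    rw [sum_identity m c h]
    have hS' : (∑ j ∈ Finset.range (m+1), ((Ak (m+1) j).derivative.eval c * c' * (c+h)^j
          + (Ak (m+1) j).eval c * ((j:ℝ) * (c+h)^(j-1) * c')))
        = c' * (∑ j ∈ Finset.range (m+1), ((Ak (m+1) j).derivative.eval c * (c+h)^j
          + (Ak (m+1) j).eval c * ((j:ℝ) * (c+h)^(j-1)))) := by
      rw [Finset.mul_sum]
      apply Finset.sum_congr rfl
      intro j _
      ring
    rw [hS']
    set P := ∑ j ∈ Finset.range (m+1), (Ak (m+1) j).eval c * (c+h)^j with hP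
    set D := ∑ j ∈ Finset.range (m+1), ((Ak (m+1) j).derivative.eval c * (c+h)^j
          + (Ak (m+1) j).eval c * ((j:ℝ) * (c+h)^(j-1))) with hD
    rw [hc']
    have hfne : f ≠ 0 := ne_of_gt hfpos
    have hsf : -((s:ℝ) * f) ≠ 0 := by
      intro hcon
      apply hfne
      have : (s:ℝ) * f = 0 := by linarith
      rcases mul_eq_zero.mp this with h1 | h1
      · exact absurd h1 hσ0
      · exact h1
    rw [← hc, ← hfdef]
    simp only [Nat.add_sub_cancel]
    push_cast [Nat.cast_add]
    field_simp
    ring
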